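/- Let α > 0, f > 0, S ∈ ℝ, φ ∈ ℝ, and define the thermal-wave profile T : (ℝ³ \ {0}) × ℝ → ℝ by T(x,t) = (S/(4πα‖x‖)) · e^{-√(πf/α)·‖x‖} · cos( 2πf·t + φ − √(πf/α)·‖x‖ ). Then T satisfies the homogeneous heat equation ∂T/∂t (x,t) = α·ΔT(x,t) for every t ∈ ℝ and every x ∈ ℝ³ with x ≠ 0; i.e., the attenuated, phase-shifted sinusoidal point-source profile solves the heat equation away from the source. -/

import Mathlib

open Real MeasureTheory Filter Topology

/-- The spatial Laplacian `Δf = Σ_{i=1}^{3} ∂²f/∂x_i²` of `f : ℝ³ → ℝ`. -/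
noncomputable def laplacian (f : EuclideanSpace ℝ (Fin 3) → ℝ)
    (x : EuclideanSpace ℝ (Fin 3)) : ℝ :=
  ∑ i : Fin 3,
    deriv (deriv (fun s : ℝ => f (x + s • EuclideanSpace.single i (1 : ℝ)))) 0

/-- The thermal-wave profile of a sinusoidal point source:
`T(x,t) = (S/(4πα‖x‖)) e^(-√(πf/α)‖x‖) cos(2πf·t + φ − √(πf/α)‖x‖)`. -/
noncomputable def thermalWave (α f S φ : ℝ) (x : EuclideanSpace ℝ (Fin 3))
    (t : ℝ) : ℝ :=
  (S / (4 * π * α * ‖x‖)) * Real.exp (-Real.sqrt (π * f / α) * ‖x‖)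
    * Real.cos (2 * π * f * t + φ - Real.sqrt (π * f / α) * ‖x‖)

noncomputable def uF (A k θ r : ℝ) : ℝ := A * Real.exp (-k*r) * Real.cos (θ - k*r)
noncomputable def UF (A k θ r : ℝ) : ℝ :=
  A * k * Real.exp (-k*r) * (Real.sin (θ - k*r) - Real.cos (θ - k*r))
noncomputable def U2F (A k θ r : ℝ) : ℝ :=
  -2 * A * k^2 * Real.exp (-k*r) * Real.sin (θ - k*r)
noncomputable def gF (A k θ r : ℝ) : ℝ := uF A k θ r / r
noncomputable def g1F (A k θ r : ℝ) : ℝ := (UF A k θ r * r - uF A k θ r) / r^2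
noncomputable def g2F (A k θ r : ℝ) : ℝ :=
  ((U2F A k θ r * r) * r^2 - (UF A k θ r * r - uF A k θ r) * (2*r)) / (r^2)^2

lemma hasDerivAt_lin (k θ : ℝ) (r : ℝ) : HasDerivAt (fun r : ℝ => θ - k*r) (-k) r := by
  have := ((hasDerivAt_id' r).const_mul k).const_sub θ
  simp only [mul_one] at this
  exact this

lemma hasDerivAt_neglin (k : ℝ) (r : ℝ) : HasDerivAt (fun r : ℝ => -k*r) (-k) r := by
  simpa using (hasDerivAt_id r).const_mul (-k)

lemma hasDerivAt_uF (A k θ r : ℝ) : HasDerivAt (fun r => uF A k θ r) (UF A k θ r) r := by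
  unfold uF UF
  have he : HasDerivAt (fun r : ℝ => Real.exp (-k*r)) (Real.exp (-k*r) * (-k)) r :=
    (hasDerivAt_neglin k r).exp
  have hc : HasDerivAt (fun r : ℝ => Real.cos (θ - k*r)) (-Real.sin (θ - k*r) * (-k)) r :=
    (hasDerivAt_lin k θ r).cos
  have := ((he.const_mul A).mul hc)
  exact this.congr_deriv (by ring)

lemma hasDerivAt_UF (A k θ r : ℝ) : HasDerivAt (fun r => UF A k θ r) (U2F A k θ r) r := by
  unfold UF U2F
  have he : HasDerivAt (fun r : ℝ => Real.exp (-k*r)) (Real.exp (-k*r) * (-k)) r :=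
    (hasDerivAt_neglin k r).exp
  have hs : HasDerivAt (fun r : ℝ => Real.sin (θ - k*r) - Real.cos (θ - k*r))
      (Real.cos (θ - k*r) * (-k) - (-Real.sin (θ - k*r) * (-k))) r :=
    ((hasDerivAt_lin k θ r).sin).sub ((hasDerivAt_lin k θ r).cos)
  have := (he.const_mul (A*k)).mul hs
  exact this.congr_deriv (by ring)

lemma hasDerivAt_gF (A k θ r : ℝ) (hr : r ≠ 0) :
    HasDerivAt (fun r => gF A k θ r) (g1F A k θ r) r := by
  unfold gF g1F
  have := (hasDerivAt_uF A k θ r).div (hasDerivAt_id r) hr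
  exact this.congr_deriv (by simp)

lemma hasDerivAt_g1F (A k θ r : ℝ) (hr : r ≠ 0) :
    HasDerivAt (fun r => g1F A k θ r) (g2F A k θ r) r := by
  unfold g1F g2F
  have hnum : HasDerivAt (fun r => UF A k θ r * r - uF A k θ r)
      (U2F A k θ r * r + UF A k θ r * 1 - UF A k θ r) r :=
    ((hasDerivAt_UF A k θ r).mul (hasDerivAt_id r)).sub (hasDerivAt_uF A k θ r)
  have hden : HasDerivAt (fun r : ℝ => r^2) (2*r) r := by
    simpa using hasDerivAt_pow 2 r
  have := hnum.div hden (pow_ne_zero 2 hr)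
  exact this.congr_deriv (by ring)

lemma radial_lap (g g1 g2 : ℝ → ℝ)
    (hg : ∀ r : ℝ, r ≠ 0 → HasDerivAt g (g1 r) r)
    (hg1 : ∀ r : ℝ, r ≠ 0 → HasDerivAt g1 (g2 r) r)
    (R c : ℝ) (hR : 0 < R) :
    deriv (deriv (fun s : ℝ => g (Real.sqrt (R^2 + 2*c*s + s^2)))) 0
      = g2 R * (c/R)^2 + g1 R * ((R^2 - c^2)/R^3) := by
  set q : ℝ → ℝ := fun s => R^2 + 2*c*s + s^2 with hq_def
  have hq : ∀ s : ℝ, HasDerivAt q (2*c + 2*s) s := by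
    intro s
    have : HasDerivAt (fun s : ℝ => R^2 + 2*c*s + s^2) (0 + 2*c*1 + 2*s) s :=
      ((hasDerivAt_const s (R^2)).add ((hasDerivAt_id s).const_mul (2*c))).add
        (by simpa using hasDerivAt_pow 2 s)
    simpa using this
  have hq0 : q 0 = R^2 := by simp [hq_def]
  have hcont : ContinuousAt q 0 := (hq 0).continuousAt
  have hpos : ∀ᶠ s : ℝ in 𝓝 0, 0 < q s := by
    have : (0:ℝ) < q 0 := by rw [hq0]; positivity
    exact hcont.eventually (eventually_gt_nhds this)
  have hsq : ∀ s : ℝ, 0 < q s →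
      HasDerivAt (fun s => Real.sqrt (q s)) ((c + s) / Real.sqrt (q s)) s := by
    intro s hs
    have h1 : HasDerivAt Real.sqrt (1 / (2 * Real.sqrt (q s))) (q s) :=
      Real.hasDerivAt_sqrt (ne_of_gt hs)
    have := h1.comp s (hq s)
    exact this.congr_deriv (by field_simp)
  have hF : ∀ s : ℝ, 0 < q s →
      HasDerivAt (fun s => g (Real.sqrt (q s)))
        (g1 (Real.sqrt (q s)) * ((c + s) / Real.sqrt (q s))) s := by
    intro s hs
    have hsqrt_ne : Real.sqrt (q s) ≠ 0 := by positivity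
    exact (hg _ hsqrt_ne).comp s (hsq s hs)
  have hEq : deriv (fun s => g (Real.sqrt (q s)))
      =ᶠ[𝓝 (0:ℝ)] fun s => g1 (Real.sqrt (q s)) * ((c + s) / Real.sqrt (q s)) := by
    filter_upwards [hpos] with s hs
    exact (hF s hs).deriv
  rw [hEq.deriv_eq]
  have hq0pos : 0 < q 0 := by rw [hq0]; positivity
  have hsqrt0 : Real.sqrt (q 0) = R := by rw [hq0, Real.sqrt_sq hR.le]
  have h1 : HasDerivAt (fun s => Real.sqrt (q s)) (c / R) 0 := by
    have := hsq 0 hq0pos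
    rw [hsqrt0] at this
    simpa using this
  have h2 : HasDerivAt (fun s => g1 (Real.sqrt (q s))) (g2 R * (c / R)) 0 := by
    have hg1' : HasDerivAt g1 (g2 R) (Real.sqrt (q 0)) := hsqrt0 ▸ hg1 R (ne_of_gt hR)
    exact hg1'.comp 0 h1
  have h3 : HasDerivAt (fun s : ℝ => (c + s) / Real.sqrt (q s))
      ((1 * R - (c + 0) * (c / R)) / R^2) 0 := by
    have hnum : HasDerivAt (fun s : ℝ => c + s) 1 0 := by
      exact (hasDerivAt_id' (0:ℝ)).const_add c
    have := hnum.div h1 (by rw [hsqrt0]; exact ne_of_gt hR)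
    exact this.congr_deriv (by rw [hsqrt0])
  have h4 : HasDerivAt (fun s => g1 (Real.sqrt (q s)) * ((c + s) / Real.sqrt (q s))) _ 0 :=
    h2.mul h3
  rw [h4.deriv, hsqrt0]
  have hRne : R ≠ 0 := ne_of_gt hR
  field_simp
  ring

lemma norm_add_single (x : EuclideanSpace ℝ (Fin 3)) (i : Fin 3) (s : ℝ) :
    ‖x + s • EuclideanSpace.single i (1:ℝ)‖ = Real.sqrt (‖x‖^2 + 2*(x i)*s + s^2) := by
  rw [EuclideanSpace.norm_eq]
  congr 1
  have hx2 : ‖x‖^2 = ∑ j : Fin 3, (x j)^2 := by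
    rw [EuclideanSpace.norm_eq, Real.sq_sqrt (by positivity)]
    simp [Real.norm_eq_abs, sq_abs]
  simp only [PiLp.add_apply, PiLp.smul_apply, EuclideanSpace.single_apply, smul_eq_mul,
    Real.norm_eq_abs, sq_abs]
  rw [hx2]
  fin_cases i <;> simp [Fin.sum_univ_three] <;> ring

/-- The attenuated, phase-shifted sinusoidal point-source profile solves the
homogeneous heat equation `∂T/∂t = α·ΔT` away from the source. -/
theorem thermalWave_solves_heat_equation (α f S φ : ℝ) (hα : 0 < α)
    (hf : 0 < f) :
    ∀ t : ℝ, ∀ x : EuclideanSpace ℝ (Fin 3), x ≠ 0 →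
      deriv (fun τ : ℝ => thermalWave α f S φ x τ) t
        = α * laplacian (fun y => thermalWave α f S φ y t) x := by
  intro t x hx
  have hR : (0:ℝ) < ‖x‖ := norm_pos_iff.mpr hx
  set R := ‖x‖ with hRdef
  have hRne : R ≠ 0 := ne_of_gt hR
  have hαne : α ≠ 0 := ne_of_gt hα
  have hπ : π ≠ 0 := Real.pi_ne_zero
  set k := Real.sqrt (π * f / α) with hk_def
  set θ := 2 * π * f * t + φ with hθ_def
  set A := S / (4 * π * α) with hA_def
  have hk2 : k^2 = π * f / α := Real.sq_sqrt (by positivity)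
  -- the profile as a radial function
  have hTx : ∀ y : EuclideanSpace ℝ (Fin 3), thermalWave α f S φ y t = gF A k θ ‖y‖ := by
    intro y
    unfold thermalWave gF uF
    rw [← hk_def, ← hθ_def, hA_def]
    rcases eq_or_ne ‖y‖ 0 with h | h
    · simp [h]
    · field_simp
  -- the laplacian
  have hlap : laplacian (fun y => thermalWave α f S φ y t) x
      = ∑ i : Fin 3, (g2F A k θ R * (x i / R)^2 + g1F A k θ R * ((R^2 - (x i)^2)/R^3)) := by
    unfold laplacian
    refine Finset.sum_congr rfl fun i _ => ?_
    have hfeq : (fun s : ℝ => thermalWave α f S φ (x + s • EuclideanSpace.single i (1:ℝ)) t)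
        = fun s : ℝ => gF A k θ (Real.sqrt (R^2 + 2*(x i)*s + s^2)) := by
      funext s
      rw [hTx, norm_add_single]
    rw [hfeq]
    exact radial_lap (fun r => gF A k θ r) (fun r => g1F A k θ r) (fun r => g2F A k θ r)
      (fun r hr => hasDerivAt_gF A k θ r hr) (fun r hr => hasDerivAt_g1F A k θ r hr)
      R (x i) hR
  -- sum of squares of coordinates
  have hx2 : (x 0)^2 + (x 1)^2 + (x 2)^2 = R^2 := by
    have : ‖x‖^2 = ∑ j : Fin 3, (x j)^2 := by
      rw [EuclideanSpace.norm_eq, Real.sq_sqrt (by positivity)]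
      simp [Real.norm_eq_abs, sq_abs]
    rw [← hRdef] at this
    rw [this, Fin.sum_univ_three]
  have hsum : laplacian (fun y => thermalWave α f S φ y t) x
      = g2F A k θ R + 2 * g1F A k θ R / R := by
    rw [hlap, Fin.sum_univ_three]
    have expand : (g2F A k θ R * (x 0 / R)^2 + g1F A k θ R * ((R^2 - (x 0)^2)/R^3))
        + (g2F A k θ R * (x 1 / R)^2 + g1F A k θ R * ((R^2 - (x 1)^2)/R^3))
        + (g2F A k θ R * (x 2 / R)^2 + g1F A k θ R * ((R^2 - (x 2)^2)/R^3))
        = g2F A k θ R * (((x 0)^2 + (x 1)^2 + (x 2)^2)/R^2)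
          + g1F A k θ R * ((3*R^2 - ((x 0)^2 + (x 1)^2 + (x 2)^2))/R^3) := by
      field_simp
      ring
    rw [expand, hx2]
    field_simp
    ring
  -- time derivative
  have htime : deriv (fun τ : ℝ => thermalWave α f S φ x τ) t
      = (S / (4 * π * α * R) * Real.exp (-k * R)) * (-Real.sin (θ - k * R) * (2 * π * f)) := by
    have hinner : HasDerivAt (fun τ : ℝ => 2 * π * f * τ + φ - k * R) (2 * π * f) t := by
      simpa using (((hasDerivAt_id t).const_mul (2*π*f)).add_const φ).sub_const (k*R)
    have hcos := hinner.cos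
    have := hcos.const_mul (S / (4 * π * α * R) * Real.exp (-k * R))
    have heq : (fun τ : ℝ => thermalWave α f S φ x τ)
        = fun τ => (S / (4 * π * α * R) * Real.exp (-k * R)) * Real.cos (2 * π * f * τ + φ - k * R) := by
      funext τ
      unfold thermalWave
      rw [← hk_def, ← hRdef]
    rw [heq]
    rw [this.deriv]
  rw [htime, hsum]
  unfold g2F g1F U2F UF uF
  rw [hk2, hA_def]
  field_simp
  ring_nf
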